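/- Let X follow the Dirichlet negative multinomial distribution DNM(r, α₀, α) on ℕ^d with r ∈ ℕ, r ≥ 1, α₀ > 2, α ∈ (0,∞)^d, with pmf P(X = k) = (B(r + |k|, α₀ + |α|)/B(r, α₀)) ∏ᵢ Γ(kᵢ+αᵢ)/(kᵢ! Γ(αᵢ)), where |k| = ∑ᵢkᵢ and |α| = ∑ᵢαᵢ. For each i and any bounded f : ℕ^d → ℝ, E[(|X| + r)(X⁽ⁱ⁾ + αᵢ) f(X + eᵢ) − X⁽ⁱ⁾(|X| − 1 + r + α₀ + |α|) f(X)] = 0. -/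

import Mathlib

open Polynomial Finset

set_option linter.unusedSectionVars false

/-- The real Beta function `B(x,y) = Γ(x)Γ(y)/Γ(x+y)`. -/
noncomputable def betaFn (x y : ℝ) : ℝ := Real.Gamma x * Real.Gamma y / Real.Gamma (x + y)

private lemma ascPoch_eq_prod (m : ℕ) (y : ℝ) :
    (ascPochhammer ℝ m).eval y = ∏ j ∈ Finset.range m, (y + j) := by
  induction m with
  | zero => simp
  | succ m ih => rw [ascPochhammer_succ_eval, ih, Finset.prod_range_succ]

private lemma ascPoch_pos {m : ℕ} {y : ℝ} (hy : 0 < y) :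
    0 < (ascPochhammer ℝ m).eval y := by
  rw [ascPoch_eq_prod]
  exact Finset.prod_pos fun j _ => by positivity

private lemma Gamma_nat_add (k : ℕ) (x : ℝ) (hx : 0 < x) :
    Real.Gamma (k + x) = (ascPochhammer ℝ k).eval x * Real.Gamma x := by
  induction k with
  | zero => simp
  | succ k ih =>
    have h1 : ((k : ℝ) + 1) + x = ((k : ℝ) + x) + 1 := by ring
    have h2 : (k : ℝ) + x ≠ 0 := by positivity
    rw [Nat.cast_succ, h1, Real.Gamma_add_one h2, ih, ascPochhammer_succ_eval]
    ring

private lemma vander2 (x y : ℝ) (n : ℕ) :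
    ∑ p ∈ Finset.HasAntidiagonal.antidiagonal n,
      ((ascPochhammer ℝ p.1).eval x / p.1.factorial) *
        ((ascPochhammer ℝ p.2).eval y / p.2.factorial)
    = (ascPochhammer ℝ n).eval (x + y) / n.factorial := by
  induction n with
  | zero => simp
  | succ n ih =>
    have key : ((n:ℝ)+1) * ∑ p ∈ Finset.HasAntidiagonal.antidiagonal (n+1),
        ((ascPochhammer ℝ p.1).eval x / p.1.factorial) *
          ((ascPochhammer ℝ p.2).eval y / p.2.factorial)
        = (x + y + n) * ∑ p ∈ Finset.HasAntidiagonal.antidiagonal n,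
        ((ascPochhammer ℝ p.1).eval x / p.1.factorial) *
          ((ascPochhammer ℝ p.2).eval y / p.2.factorial) := by
      have expand : ∀ p ∈ Finset.HasAntidiagonal.antidiagonal (n+1),
          ((n:ℝ)+1) * (((ascPochhammer ℝ p.1).eval x / p.1.factorial) *
            ((ascPochhammer ℝ p.2).eval y / p.2.factorial))
          = (p.1 : ℝ) * (((ascPochhammer ℝ p.1).eval x / p.1.factorial) *
            ((ascPochhammer ℝ p.2).eval y / p.2.factorial))
           + (p.2 : ℝ) * (((ascPochhammer ℝ p.1).eval x / p.1.factorial) *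
            ((ascPochhammer ℝ p.2).eval y / p.2.factorial)) := by
        intro p hp
        have : p.1 + p.2 = n + 1 := Finset.HasAntidiagonal.mem_antidiagonal.mp hp
        have : ((p.1 : ℝ) + p.2) = (n : ℝ) + 1 := by exact_mod_cast congrArg Nat.cast this
        rw [← add_mul, this]
      rw [Finset.mul_sum, Finset.sum_congr rfl expand, Finset.sum_add_distrib]
      have s1 : ∑ p ∈ Finset.HasAntidiagonal.antidiagonal (n+1),
          (p.1 : ℝ) * (((ascPochhammer ℝ p.1).eval x / p.1.factorial) *
            ((ascPochhammer ℝ p.2).eval y / p.2.factorial))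
          = ∑ p ∈ Finset.HasAntidiagonal.antidiagonal n,
          (x + p.1) * (((ascPochhammer ℝ p.1).eval x / p.1.factorial) *
            ((ascPochhammer ℝ p.2).eval y / p.2.factorial)) := by
        rw [Finset.Nat.sum_antidiagonal_succ]
        simp only [Nat.cast_zero, zero_mul, zero_add]
        refine Finset.sum_congr rfl fun p _ => ?_
        rw [ascPochhammer_succ_eval, Nat.factorial_succ]
        push_cast
        field_simp
      have s2 : ∑ p ∈ Finset.HasAntidiagonal.antidiagonal (n+1),
          (p.2 : ℝ) * (((ascPochhammer ℝ p.1).eval x / p.1.factorial) *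
            ((ascPochhammer ℝ p.2).eval y / p.2.factorial))
          = ∑ p ∈ Finset.HasAntidiagonal.antidiagonal n,
          (y + p.2) * (((ascPochhammer ℝ p.1).eval x / p.1.factorial) *
            ((ascPochhammer ℝ p.2).eval y / p.2.factorial)) := by
        rw [Finset.Nat.sum_antidiagonal_succ']
        simp only [Nat.cast_zero, zero_mul, zero_add]
        refine Finset.sum_congr rfl fun p hp => ?_
        rw [ascPochhammer_succ_eval, Nat.factorial_succ]
        push_cast
        field_simp
      rw [s1, s2, ← Finset.sum_add_distrib, Finset.mul_sum]
      refine Finset.sum_congr rfl fun p hp => ?_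
      have h : p.1 + p.2 = n := Finset.HasAntidiagonal.mem_antidiagonal.mp hp
      have : ((p.1 : ℝ) + p.2) = (n : ℝ) := by exact_mod_cast congrArg Nat.cast h
      rw [← add_mul]
      congr 1
      linarith
    rw [ih] at key
    have hnf : (n.factorial : ℝ) ≠ 0 := by positivity
    have key2 : ((n:ℝ)+1) * (∑ p ∈ Finset.HasAntidiagonal.antidiagonal (n+1),
        ((ascPochhammer ℝ p.1).eval x / p.1.factorial) *
          ((ascPochhammer ℝ p.2).eval y / p.2.factorial)) * n.factorial
        = (x + y + n) * (ascPochhammer ℝ n).eval (x+y) := by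
      have h := congrArg (fun z => z * (n.factorial:ℝ)) key
      simpa [mul_assoc, div_mul_cancel₀, hnf] using h
    have hfac : (((n+1).factorial : ℕ) : ℝ) = ((n:ℝ)+1) * n.factorial := by
      rw [Nat.factorial_succ]; push_cast; ring
    rw [ascPochhammer_succ_eval, hfac, eq_div_iff (by positivity)]
    push_cast
    linear_combination key2

private lemma sum_AT_succ {d n : ℕ} (F : (Fin (d+1) → ℕ) → ℝ) :
    ∑ k ∈ Finset.Nat.antidiagonalTuple (d+1) n, F k
      = ∑ p ∈ Finset.HasAntidiagonal.antidiagonal n, ∑ k ∈ Finset.Nat.antidiagonalTuple d p.2,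
          F (Fin.cons p.1 k) := by
  rw [Finset.sum_sigma']
  refine Finset.sum_nbij' (fun k => ⟨(k 0, ∑ i, Fin.tail k i), Fin.tail k⟩)
    (fun x => Fin.cons x.1.1 x.2) ?_ ?_ ?_ ?_ ?_
  · intro k hk
    have hs : ∑ i, k i = n := Finset.Nat.mem_antidiagonalTuple.mp hk
    refine Finset.mem_sigma.mpr ⟨Finset.HasAntidiagonal.mem_antidiagonal.mpr ?_, Finset.Nat.mem_antidiagonalTuple.mpr rfl⟩
    rw [← hs, Fin.sum_univ_succ]
    rfl
  · intro x hx
    have hx' := Finset.mem_sigma.mp hx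
    have h1 : x.1.1 + x.1.2 = n := Finset.HasAntidiagonal.mem_antidiagonal.mp hx'.1
    have h2 : ∑ i, x.2 i = x.1.2 := Finset.Nat.mem_antidiagonalTuple.mp hx'.2
    refine Finset.Nat.mem_antidiagonalTuple.mpr ?_
    rw [Fin.sum_univ_succ]
    simp [h2, h1]
  · intro k _
    simp [Fin.cons_self_tail]
  · intro x hx
    have hx' := Finset.mem_sigma.mp hx
    have h2 : ∑ i, x.2 i = x.1.2 := Finset.Nat.mem_antidiagonalTuple.mp hx'.2
    ext
    · simp
    · simp [Fin.tail_cons, h2]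
    · simp [Fin.tail_cons]
  · intro k _
    simp [Fin.cons_self_tail]

private lemma vanderTuple (d : ℕ) (n : ℕ) (β : Fin d → ℝ) :
    ∑ k ∈ Finset.Nat.antidiagonalTuple d n,
      ∏ i, (ascPochhammer ℝ (k i)).eval (β i) / (k i).factorial
    = (ascPochhammer ℝ n).eval (∑ i, β i) / n.factorial := by
  induction d generalizing n with
  | zero =>
    cases n with
    | zero => simp
    | succ n => simp [ascPochhammer_succ_eval, ascPochhammer_eval_zero]; split <;> simp_all
  | succ d ih =>
    rw [sum_AT_succ]
    have : ∀ p ∈ Finset.HasAntidiagonal.antidiagonal n,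
        ∑ k ∈ Finset.Nat.antidiagonalTuple d p.2,
          ∏ i, (ascPochhammer ℝ ((Fin.cons p.1 k : Fin (d+1) → ℕ) i)).eval (β i)
              / ((Fin.cons p.1 k : Fin (d+1) → ℕ) i).factorial
        = ((ascPochhammer ℝ p.1).eval (β 0) / p.1.factorial) *
            ((ascPochhammer ℝ p.2).eval (∑ i : Fin d, β i.succ) / p.2.factorial) := by
      intro p hp
      have : ∀ k ∈ Finset.Nat.antidiagonalTuple d p.2,
          ∏ i, (ascPochhammer ℝ ((Fin.cons p.1 k : Fin (d+1) → ℕ) i)).eval (β i)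
              / ((Fin.cons p.1 k : Fin (d+1) → ℕ) i).factorial
          = ((ascPochhammer ℝ p.1).eval (β 0) / p.1.factorial) *
              ∏ i, (ascPochhammer ℝ (k i)).eval (β i.succ) / (k i).factorial := by
        intro k _
        rw [Fin.prod_univ_succ]
        simp
      rw [Finset.sum_congr rfl this, ← Finset.mul_sum, ih]
    rw [Finset.sum_congr rfl this, vander2, Fin.sum_univ_succ]

/-- Wendel-type upper bound from log-convexity. -/
private lemma wendel_upper {x l : ℝ} (hx : 0 < x) (hl : 0 ≤ l) (hl1 : l ≤ 1) :
    Real.Gamma (x + l) ≤ Real.Gamma x * x ^ l := by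
  have hG : 0 < Real.Gamma x := Real.Gamma_pos_of_pos hx
  have hG1 : Real.Gamma (x + 1) = x * Real.Gamma x := Real.Gamma_add_one (ne_of_gt hx)
  have hcvx := Real.convexOn_log_Gamma
  have h := hcvx.2 (Set.mem_Ioi.mpr hx) (Set.mem_Ioi.mpr (by linarith : (0:ℝ) < x + 1))
    (by linarith : (0:ℝ) ≤ 1 - l) hl (by ring)
  simp only [Function.comp_apply, smul_eq_mul] at h
  have hpt : (1 - l) * x + l * (x + 1) = x + l := by ring
  rw [hpt] at h
  have hGxl : 0 < Real.Gamma (x + l) := Real.Gamma_pos_of_pos (by linarith)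
  calc Real.Gamma (x + l) = Real.exp (Real.log (Real.Gamma (x + l))) := (Real.exp_log hGxl).symm
    _ ≤ Real.exp ((1-l) * Real.log (Real.Gamma x) + l * Real.log (Real.Gamma (x+1))) :=
        Real.exp_le_exp.mpr h
    _ = Real.Gamma x * x ^ l := by
        rw [hG1, Real.log_mul (ne_of_gt hx) (ne_of_gt hG), Real.exp_add]
        rw [mul_add, Real.exp_add]
        rw [← Real.log_rpow hG, ← Real.log_rpow hG, ← Real.log_rpow hx]
        rw [Real.exp_log (Real.rpow_pos_of_pos hG _), Real.exp_log (Real.rpow_pos_of_pos hG _),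
          Real.exp_log (Real.rpow_pos_of_pos hx _)]
        rw [mul_comm (x ^ l), ← mul_assoc, ← Real.rpow_add hG]
        norm_num
  
private lemma wendel_lower {x l : ℝ} (hx : 0 < x) (hl : 0 ≤ l) (hl1 : l ≤ 1) :
    Real.Gamma x * x * (x + l) ^ (l - 1) ≤ Real.Gamma (x + l) := by
  have hxl : 0 < x + l := by linarith
  have hG : 0 < Real.Gamma (x + l) := Real.Gamma_pos_of_pos hxl
  have hG1 : Real.Gamma (x + l + 1) = (x + l) * Real.Gamma (x + l) :=
    Real.Gamma_add_one (ne_of_gt hxl)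
  have hcvx := Real.convexOn_log_Gamma
  have h := hcvx.2 (Set.mem_Ioi.mpr hxl) (Set.mem_Ioi.mpr (by linarith : (0:ℝ) < x + l + 1))
    hl (by linarith : (0:ℝ) ≤ 1 - l) (by ring)
  simp only [Function.comp_apply, smul_eq_mul] at h
  have hpt : l * (x + l) + (1 - l) * (x + l + 1) = x + 1 := by ring
  rw [hpt] at h
  have key : Real.Gamma (x + 1) ≤ Real.Gamma (x + l) * (x + l) ^ (1 - l) := by
    calc Real.Gamma (x + 1) = Real.exp (Real.log (Real.Gamma (x + 1))) :=
          (Real.exp_log (Real.Gamma_pos_of_pos (by linarith))).symm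
      _ ≤ Real.exp (l * Real.log (Real.Gamma (x+l)) + (1-l) * Real.log (Real.Gamma (x+l+1))) :=
          Real.exp_le_exp.mpr h
      _ = Real.Gamma (x + l) * (x + l) ^ (1 - l) := by
          rw [hG1, Real.log_mul (ne_of_gt hxl) (ne_of_gt hG), Real.exp_add, mul_add, Real.exp_add]
          rw [← Real.log_rpow hG, ← Real.log_rpow hG, ← Real.log_rpow hxl]
          rw [Real.exp_log (Real.rpow_pos_of_pos hG _), Real.exp_log (Real.rpow_pos_of_pos hG _),
            Real.exp_log (Real.rpow_pos_of_pos hxl _)]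
          rw [mul_comm ((x+l) ^ (1-l)), ← mul_assoc, ← Real.rpow_add hG]
          norm_num
  have hx1 : Real.Gamma (x + 1) = x * Real.Gamma x := Real.Gamma_add_one (ne_of_gt hx)
  rw [hx1] at key
  have hpow : (0:ℝ) < (x + l) ^ (1 - l) := Real.rpow_pos_of_pos hxl _
  have := mul_le_mul_of_nonneg_right key (le_of_lt (Real.rpow_pos_of_pos hxl (l - 1)))
  calc Real.Gamma x * x * (x + l) ^ (l - 1) = x * Real.Gamma x * (x+l) ^ (l-1) := by ring
    _ ≤ Real.Gamma (x+l) * (x+l) ^ (1-l) * (x+l) ^ (l-1) := this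
    _ = Real.Gamma (x+l) := by
        rw [mul_assoc, ← Real.rpow_add hxl]
        norm_num

private lemma Gamma_add_le {x t : ℝ} (hx : 0 < x) (ht : 0 ≤ t) :
    Real.Gamma (x + t) ≤ Real.Gamma x * (x + t) ^ t := by
  set m : ℕ := ⌊t⌋₊ with hm
  set l : ℝ := t - m with hldef
  have hl : 0 ≤ l := by
    have := Nat.floor_le ht
    simp only [hldef]; linarith
  have hl1 : l ≤ 1 := by
    have := Nat.lt_floor_add_one t
    simp only [hldef]; linarith
  have hxl : 0 < x + l := by linarith
  have hsplit : x + t = (m : ℝ) + (x + l) := by simp only [hldef]; ring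
  have e1 : Real.Gamma (x + t) = (ascPochhammer ℝ m).eval (x + l) * Real.Gamma (x + l) := by
    rw [hsplit, Gamma_nat_add m _ hxl]
  have hasc_pos : 0 < (ascPochhammer ℝ m).eval (x + l) := by
    rw [ascPoch_eq_prod]
    exact Finset.prod_pos fun j _ => by positivity
  have hbnd1 : (ascPochhammer ℝ m).eval (x + l) ≤ (x + t) ^ (m : ℕ) := by
    rw [ascPoch_eq_prod]
    calc ∏ j ∈ Finset.range m, (x + l + j) ≤ ∏ _j ∈ Finset.range m, (x + t) := by
          refine Finset.prod_le_prod (fun j _ => by positivity) fun j hj => ?_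
          have hj' : (j : ℝ) ≤ (m : ℝ) - 1 := by
            have := Finset.mem_range.mp hj
            have : (j : ℝ) + 1 ≤ (m : ℝ) := by exact_mod_cast this
            linarith
          have : (m : ℝ) ≤ t := by simpa [hldef] using hl
          linarith
      _ = (x + t) ^ (m : ℕ) := by rw [Finset.prod_const, Finset.card_range]
  have hbnd2 : Real.Gamma (x + l) ≤ Real.Gamma x * (x + t) ^ l := by
    refine (wendel_upper hx hl hl1).trans ?_
    have : x ^ l ≤ (x + t) ^ l := Real.rpow_le_rpow (le_of_lt hx) (by linarith) hl
    exact mul_le_mul_of_nonneg_left this (le_of_lt (Real.Gamma_pos_of_pos hx))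
  calc Real.Gamma (x + t) = (ascPochhammer ℝ m).eval (x + l) * Real.Gamma (x + l) := e1
    _ ≤ (x + t) ^ (m : ℕ) * (Real.Gamma x * (x + t) ^ l) := by
        refine mul_le_mul hbnd1 hbnd2 (le_of_lt (Real.Gamma_pos_of_pos hxl)) (by positivity)
    _ = Real.Gamma x * (x + t) ^ t := by
        rw [← Real.rpow_natCast (x + t) m, ← mul_assoc, mul_comm ((x+t) ^ (m:ℝ)),
          mul_assoc, ← Real.rpow_add (by linarith : (0:ℝ) < x + t)]
        congr 2
        simp only [hldef]; ring

private lemma Gamma_add_ge {x t : ℝ} (hx : 1 ≤ x) (ht : 0 ≤ t) :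
    Real.Gamma x * x ^ t / 2 ≤ Real.Gamma (x + t) := by
  have hx0 : (0:ℝ) < x := by linarith
  set m : ℕ := ⌊t⌋₊ with hm
  set l : ℝ := t - m with hldef
  have hl : 0 ≤ l := by
    have := Nat.floor_le ht
    simp only [hldef]; linarith
  have hl1 : l ≤ 1 := by
    have := Nat.lt_floor_add_one t
    simp only [hldef]; linarith
  have hxl : 0 < x + l := by linarith
  have hsplit : x + t = (m : ℝ) + (x + l) := by simp only [hldef]; ring
  have e1 : Real.Gamma (x + t) = (ascPochhammer ℝ m).eval (x + l) * Real.Gamma (x + l) := by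
    rw [hsplit, Gamma_nat_add m _ hxl]
  have hbnd1 : x ^ (m : ℕ) ≤ (ascPochhammer ℝ m).eval (x + l) := by
    rw [ascPoch_eq_prod]
    calc x ^ (m:ℕ) = ∏ _j ∈ Finset.range m, x := by rw [Finset.prod_const, Finset.card_range]
      _ ≤ ∏ j ∈ Finset.range m, (x + l + j) := by
          refine Finset.prod_le_prod (fun j _ => by positivity) fun j _ => by
            have : (0:ℝ) ≤ (j:ℝ) := Nat.cast_nonneg j
            linarith
  have hbnd2 : Real.Gamma x * x ^ l / 2 ≤ Real.Gamma (x + l) := by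
    refine le_trans ?_ (wendel_lower hx0 hl hl1)
    have h2x : x + l ≤ 2 * x := by linarith
    have step1 : (2*x) ^ (l-1) ≤ (x + l) ^ (l-1) :=
      Real.rpow_le_rpow_of_nonpos hxl h2x (by linarith)
    have step2 : (2*x) ^ (l-1) = 2 ^ (l-1) * x ^ (l-1) :=
      Real.mul_rpow (by norm_num) (le_of_lt hx0)
    have step3 : (2:ℝ)⁻¹ ≤ 2 ^ (l-1) := by
      have : (2:ℝ) ^ (-1:ℝ) ≤ 2 ^ (l-1) :=
        Real.rpow_le_rpow_of_exponent_le (by norm_num) (by linarith)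
      simpa [Real.rpow_neg_one] using this
    have hGx : 0 < Real.Gamma x := Real.Gamma_pos_of_pos hx0
    have hxl1 : x * x ^ (l-1) = x ^ l := by
      nth_rewrite 1 [← Real.rpow_one x]
      rw [← Real.rpow_add hx0]; norm_num
    calc Real.Gamma x * x ^ l / 2
        = Real.Gamma x * x * (2⁻¹ * x ^ (l-1)) := by
          rw [← hxl1]; ring
      _ ≤ Real.Gamma x * x * (2 ^ (l-1) * x ^ (l-1)) := by
          refine mul_le_mul_of_nonneg_left ?_ (by positivity)
          exact mul_le_mul_of_nonneg_right step3 (by positivity)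
      _ = Real.Gamma x * x * (2*x) ^ (l-1) := by rw [step2]
      _ ≤ Real.Gamma x * x * (x + l) ^ (l-1) := by
          refine mul_le_mul_of_nonneg_left step1 (by positivity)
  calc Real.Gamma x * x ^ t / 2
      = x ^ (m:ℕ) * (Real.Gamma x * x ^ l / 2) := by
        rw [← Real.rpow_natCast x m]
        have : x ^ t = x ^ (m:ℝ) * x ^ l := by
          rw [← Real.rpow_add hx0]
          congr 1
          simp only [hldef]; ring
        rw [this]; ring
    _ ≤ (ascPochhammer ℝ m).eval (x + l) * Real.Gamma (x + l) := by
        refine mul_le_mul hbnd1 hbnd2 (by positivity) ?_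
        have : (0:ℝ) < (ascPochhammer ℝ m).eval (x+l) := by
          rw [ascPoch_eq_prod]; exact Finset.prod_pos fun j _ => by positivity
        linarith
    _ = Real.Gamma (x + t) := e1.symm

private lemma slice_bound (r : ℕ) (hr : 1 ≤ r) {s α₀ C : ℝ} (hs : 0 < s) (h0 : 2 < α₀)
    (hC : 0 ≤ C) (n : ℕ) (hn : 1 ≤ n) :
    Real.Gamma ((n:ℝ) + r) / Real.Gamma ((n:ℝ) + r + (α₀ + s)) *
        (Real.Gamma ((n:ℝ) + s) / (n.factorial : ℝ)) * ((n:ℝ) + C)^2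
      ≤ (4 * (1+s)^s * (1+C)^2) * ((n:ℝ)+1) ^ (1 - α₀) := by
  set N : ℝ := (n : ℝ) with hN
  have hN1 : (1:ℝ) ≤ N := by rw [hN]; exact_mod_cast hn
  have hN0 : (0:ℝ) < N := by linarith
  have hNp : (0:ℝ) < N + 1 := by linarith
  have hu : (0:ℝ) < α₀ + s := by linarith
  have hrR : (1:ℝ) ≤ (r:ℝ) := by exact_mod_cast hr
  have hNr : (1:ℝ) ≤ N + r := by linarith
  have hNr0 : (0:ℝ) < N + r := by linarith
  have hfac : (0:ℝ) < (n.factorial : ℝ) := by exact_mod_cast Nat.factorial_pos n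
  have hGB : 0 < Real.Gamma (N + r + (α₀ + s)) := Real.Gamma_pos_of_pos (by linarith)
  have hGA : 0 < Real.Gamma (N + r) := Real.Gamma_pos_of_pos hNr0
  have hGG : 0 < Real.Gamma (N + s) := Real.Gamma_pos_of_pos (by linarith)
  -- first factor
  have h1 : Real.Gamma (N + r) / Real.Gamma (N + r + (α₀ + s)) ≤ 2 * (N+1) ^ (-(α₀+s)) := by
    have hge := Gamma_add_ge hNr (le_of_lt hu)
    have hcalc : 2*(N+r)^(-(α₀+s)) * (Real.Gamma (N+r) * (N+r)^(α₀+s) / 2)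
        = Real.Gamma (N+r) := by
      rw [Real.rpow_neg (le_of_lt hNr0)]
      have hpow : (0:ℝ) < (N + r) ^ (α₀ + s) := Real.rpow_pos_of_pos hNr0 _
      field_simp
    have hA : Real.Gamma (N + r) ≤ 2*(N+r)^(-(α₀+s)) * Real.Gamma (N + r + (α₀+s)) := by
      rw [← hcalc]
      have hc : (0:ℝ) ≤ 2*(N+r)^(-(α₀+s)) := by positivity
      exact mul_le_mul_of_nonneg_left hge hc
    have hmono : (N+r)^(-(α₀+s)) ≤ (N+1)^(-(α₀+s)) :=
      Real.rpow_le_rpow_of_nonpos hNp (by linarith) (by linarith)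
    rw [div_le_iff₀ hGB]
    calc Real.Gamma (N + r) ≤ 2*(N+r)^(-(α₀+s)) * Real.Gamma (N + r + (α₀+s)) := hA
      _ ≤ 2*(N+1)^(-(α₀+s)) * Real.Gamma (N + r + (α₀+s)) := by
          refine mul_le_mul_of_nonneg_right ?_ (le_of_lt hGB)
          linarith
  -- second factor
  have hG2 : Real.Gamma (N + s) ≤ (n.factorial : ℝ) * (N+s)^s / N := by
    rcases le_or_gt 1 s with hs1 | hs1
    · have h := Gamma_add_le (x := N+1) (t := s-1) (by linarith) (by linarith)
      have he : N + 1 + (s - 1) = N + s := by ring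
      rw [he] at h
      have hfe : Real.Gamma (N + 1) = (n.factorial : ℝ) := Real.Gamma_nat_eq_factorial n
      rw [hfe] at h
      refine h.trans ?_
      have hNs : (0:ℝ) < N + s := by linarith
      have he2 : (N+s)^(s-1) = (N+s)^s * (N+s)⁻¹ := by
        rw [← Real.rpow_neg_one (N+s), ← Real.rpow_add hNs]
        ring_nf
      rw [he2]
      rw [div_eq_mul_inv, ← mul_assoc]
      refine mul_le_mul_of_nonneg_left ?_ (by positivity)
      exact inv_anti₀ hN0 (by linarith)
    · have h := Gamma_add_le (x := N) (t := s) hN0 (le_of_lt hs)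
      have hGN : Real.Gamma N = (n.factorial : ℝ) / N := by
        have h1 : Real.Gamma (N + 1) = N * Real.Gamma N := Real.Gamma_add_one (ne_of_gt hN0)
        have h2 : Real.Gamma (N + 1) = (n.factorial : ℝ) := Real.Gamma_nat_eq_factorial n
        field_simp
        linarith [h1, h2]
      rw [hGN] at h
      refine h.trans ?_
      exact le_of_eq (by ring)
  have h2 : Real.Gamma (N + s) / (n.factorial : ℝ) ≤ (1+s)^s * (N+1)^s * (2*(N+1)⁻¹) := by
    have step : Real.Gamma (N + s) / (n.factorial : ℝ) ≤ (N+s)^s / N := by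
      rw [div_le_div_iff₀ hfac hN0] at *
      calc Real.Gamma (N+s) * N ≤ ((n.factorial:ℝ) * (N+s)^s / N) * N := by
            exact mul_le_mul_of_nonneg_right hG2 (le_of_lt hN0)
        _ = (N+s)^s * (n.factorial:ℝ) := by field_simp
    refine step.trans ?_
    have hb : (N+s)^s ≤ (1+s)^s * (N+1)^s := by
      rw [← Real.mul_rpow (by linarith) (by linarith)]
      refine Real.rpow_le_rpow (by linarith) (by nlinarith) (le_of_lt hs)
    have hinv : N⁻¹ ≤ 2*(N+1)⁻¹ := by
      have h' : (1:ℝ)/N ≤ 2/(N+1) := by rw [div_le_div_iff₀ hN0 hNp]; linarith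
      simpa [one_div, div_eq_mul_inv] using h'
    calc (N+s)^s / N = (N+s)^s * N⁻¹ := by rw [div_eq_mul_inv]
      _ ≤ ((1+s)^s * (N+1)^s) * (2*(N+1)⁻¹) := by
          refine mul_le_mul hb hinv (by positivity) (by positivity)
  -- third factor
  have h4 : (N + C)^2 ≤ (1+C)^2 * (N+1)^2 := by
    rw [← mul_pow]
    have : N + C ≤ (1+C)*(N+1) := by nlinarith
    exact pow_le_pow_left₀ (by positivity) this 2
  -- combine
  have hL1 : (0:ℝ) ≤ Real.Gamma (N + r) / Real.Gamma (N + r + (α₀ + s)) := by positivity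
  have hcomb : Real.Gamma (N + r) / Real.Gamma (N + r + (α₀ + s)) *
      (Real.Gamma (N + s) / (n.factorial : ℝ)) * ((N:ℝ) + C)^2
      ≤ (2 * (N+1) ^ (-(α₀+s))) * ((1+s)^s * (N+1)^s * (2*(N+1)⁻¹)) * ((1+C)^2 * (N+1)^2) := by
    refine mul_le_mul (mul_le_mul h1 h2 (by positivity) (by positivity)) h4 (by positivity) ?_
    positivity
  refine hcomb.trans (le_of_eq ?_)
  have e : (N+1)^(-(α₀+s)) * ((N+1)^s * (N+1)⁻¹ * (N+1)^(2:ℕ)) = (N+1)^(1-α₀) := by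
    rw [← Real.rpow_neg_one (N+1), ← Real.rpow_natCast (N+1) 2,
      ← Real.rpow_add hNp, ← Real.rpow_add hNp, ← Real.rpow_add hNp]
    norm_num
    ring_nf
  calc (2 * (N+1) ^ (-(α₀+s))) * ((1+s)^s * (N+1)^s * (2*(N+1)⁻¹)) * ((1+C)^2 * (N+1)^2)
      = (4 * (1+s)^s * (1+C)^2) * ((N+1)^(-(α₀+s)) * ((N+1)^s * (N+1)⁻¹ * (N+1)^(2:ℕ))) := by
        ring
    _ = (4 * (1+s)^s * (1+C)^2) * (N+1)^(1-α₀) := by rw [e]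

section auxSection
variable
    (d : ℕ) (hd : 0 < d) (r : ℕ) (hr : 1 ≤ r) (α₀ : ℝ) (hα₀ : 2 < α₀)
    (α : Fin d → ℝ) (hα : ∀ i, 0 < α i)
    (pmf : (Fin d → ℕ) → ℝ)
    (hpmf : ∀ k : Fin d → ℕ, pmf k =
      betaFn ((r : ℝ) + ∑ i, (k i : ℝ)) (α₀ + ∑ i, α i) / betaFn (r : ℝ) α₀ *
        ∏ i, Real.Gamma ((k i : ℝ) + α i) / (Nat.factorial (k i) * Real.Gamma (α i)))

private lemma sum_update_nat (k : Fin d → ℕ) (i : Fin d) :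
    ∑ j, (Function.update k i (k i + 1)) j = (∑ j, k j) + 1 := by
  rw [Finset.sum_update_of_mem (Finset.mem_univ i), ← Finset.erase_eq]
  rw [← Finset.add_sum_erase _ k (Finset.mem_univ i)]
  omega

private lemma sum_update_cast (k : Fin d → ℕ) (i : Fin d) :
    ∑ j, ((Function.update k i (k i + 1)) j : ℝ) = (∑ j, (k j : ℝ)) + 1 := by
  have h1 := congrArg (fun m : ℕ => (m:ℝ)) (sum_update_nat d k i)
  push_cast at h1
  exact h1


include hd hr hα₀ hα hpmf

private lemma pmf_nonneg (k : Fin d → ℕ) : 0 ≤ pmf k := by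
  rw [hpmf k]
  have hs : 0 < ∑ i, α i :=
    Finset.sum_pos (fun i _ => hα i) (Finset.univ_nonempty_iff.mpr (Fin.pos_iff_nonempty.mp hd))
  have hrp : (0:ℝ) < (r:ℝ) := by exact_mod_cast Nat.lt_of_lt_of_le Nat.zero_lt_one hr
  have h1 : 0 < betaFn ((r : ℝ) + ∑ i, (k i : ℝ)) (α₀ + ∑ i, α i) := by
    unfold betaFn
    have hk : (0:ℝ) ≤ ∑ i, (k i : ℝ) := Finset.sum_nonneg fun i _ => Nat.cast_nonneg _
    have g1 : 0 < Real.Gamma ((r:ℝ) + ∑ i, (k i:ℝ)) := Real.Gamma_pos_of_pos (by linarith)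
    have g2 : 0 < Real.Gamma (α₀ + ∑ i, α i) := Real.Gamma_pos_of_pos (by linarith)
    have g3 : 0 < Real.Gamma ((r:ℝ) + ∑ i, (k i:ℝ) + (α₀ + ∑ i, α i)) :=
      Real.Gamma_pos_of_pos (by linarith)
    positivity
  have h2 : 0 < betaFn (r:ℝ) α₀ := by
    unfold betaFn
    have g1 : 0 < Real.Gamma (r:ℝ) := Real.Gamma_pos_of_pos hrp
    have g2 : 0 < Real.Gamma α₀ := Real.Gamma_pos_of_pos (by linarith)
    have g3 : 0 < Real.Gamma ((r:ℝ) + α₀) := Real.Gamma_pos_of_pos (by linarith)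
    positivity
  have h3 : 0 ≤ ∏ i, Real.Gamma ((k i : ℝ) + α i) / (Nat.factorial (k i) * Real.Gamma (α i)) := by
    refine Finset.prod_nonneg fun i _ => ?_
    have g1 : 0 < Real.Gamma ((k i : ℝ) + α i) :=
      Real.Gamma_pos_of_pos (by have := hα i; have : (0:ℝ) ≤ (k i : ℝ) := Nat.cast_nonneg _; linarith [hα i])
    have g2 : 0 < Real.Gamma (α i) := Real.Gamma_pos_of_pos (hα i)
    have g3 : (0:ℝ) < Nat.factorial (k i) := by exact_mod_cast Nat.factorial_pos _
    positivity
  positivity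

private lemma slice_eval (n : ℕ) :
    ∑ k ∈ Finset.Nat.antidiagonalTuple d n, ((∑ j, (k j : ℝ)) + (r + α₀ + ∑ i, α i))^2 * pmf k
      = ((n:ℝ) + (r + α₀ + ∑ i, α i))^2 *
          (betaFn ((r : ℝ) + n) (α₀ + ∑ i, α i) / betaFn (r : ℝ) α₀) *
          (Real.Gamma ((n:ℝ) + ∑ i, α i) / (n.factorial * Real.Gamma (∑ i, α i))) := by
  set s : ℝ := ∑ i, α i with hsdef
  have hs : 0 < s :=
    Finset.sum_pos (fun i _ => hα i) (Finset.univ_nonempty_iff.mpr (Fin.pos_iff_nonempty.mp hd))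
  have step : ∀ k ∈ Finset.Nat.antidiagonalTuple d n,
      ((∑ j, (k j : ℝ)) + (r + α₀ + s))^2 * pmf k
        = ((n:ℝ) + (r + α₀ + s))^2 * (betaFn ((r : ℝ) + n) (α₀ + s) / betaFn (r : ℝ) α₀) *
            ∏ i, (ascPochhammer ℝ (k i)).eval (α i) / (k i).factorial := by
    intro k hk
    have hsum : ∑ j, k j = n := Finset.Nat.mem_antidiagonalTuple.mp hk
    have hsumR : (∑ j, (k j : ℝ)) = (n:ℝ) := by
      rw [← hsum]; push_cast; rfl
    rw [hpmf k, hsumR]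
    have hprod : ∏ i, Real.Gamma ((k i : ℝ) + α i) / (Nat.factorial (k i) * Real.Gamma (α i))
        = ∏ i, (ascPochhammer ℝ (k i)).eval (α i) / (k i).factorial := by
      refine Finset.prod_congr rfl fun i _ => ?_
      rw [Gamma_nat_add (k i) (α i) (hα i)]
      have hGα : Real.Gamma (α i) ≠ 0 := ne_of_gt (Real.Gamma_pos_of_pos (hα i))
      have hf : ((k i).factorial : ℝ) ≠ 0 := by exact_mod_cast Nat.factorial_ne_zero _
      field_simp
    rw [hprod]
    ring
  rw [Finset.sum_congr rfl step, ← Finset.mul_sum, vanderTuple d n α, ← hsdef]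
  have hΓs : Real.Gamma s ≠ 0 := ne_of_gt (Real.Gamma_pos_of_pos hs)
  have hn0 : ((n.factorial : ℝ)) ≠ 0 := by exact_mod_cast Nat.factorial_ne_zero _
  rw [Gamma_nat_add n s hs, mul_comm ((ascPochhammer ℝ n).eval s) (Real.Gamma s),
    mul_comm ((n.factorial:ℝ)) (Real.Gamma s), mul_div_mul_left _ _ hΓs]

private lemma summable_weighted :
    Summable (fun k : Fin d → ℕ =>
      ((∑ j, (k j : ℝ)) + (r + α₀ + ∑ i, α i))^2 * pmf k) := by
  set s : ℝ := ∑ i, α i with hsdef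
  have hs : 0 < s :=
    Finset.sum_pos (fun i _ => hα i) (Finset.univ_nonempty_iff.mpr (Fin.pos_iff_nonempty.mp hd))
  set C : ℝ := r + α₀ + s with hCdef
  have hrp : (0:ℝ) < (r:ℝ) := by exact_mod_cast Nat.lt_of_lt_of_le Nat.zero_lt_one hr
  have hC : 0 ≤ C := by rw [hCdef]; positivity
  set F : (Fin d → ℕ) → ℝ := fun k => ((∑ j, (k j : ℝ)) + C)^2 * pmf k with hF
  have hFnn : ∀ k, 0 ≤ F k := by
    intro k
    have := pmf_nonneg d hd r hr α₀ hα₀ α hα pmf hpmf k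
    have hk : (0:ℝ) ≤ ∑ j, (k j : ℝ) := Finset.sum_nonneg fun i _ => Nat.cast_nonneg _
    rw [hF]
    positivity
  -- slice sum function
  set S : ℕ → ℝ := fun n => ((n:ℝ) + C)^2 *
      (betaFn ((r : ℝ) + n) (α₀ + s) / betaFn (r : ℝ) α₀) *
      (Real.Gamma ((n:ℝ) + s) / (n.factorial * Real.Gamma s)) with hS
  have hslice : ∀ n, ∑ k ∈ Finset.Nat.antidiagonalTuple d n, F k = S n := fun n =>
    slice_eval d hd r hr α₀ hα₀ α hα pmf hpmf n
  have hSnn : ∀ n, 0 ≤ S n := by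
    intro n
    rw [← hslice n]
    exact Finset.sum_nonneg fun k _ => hFnn k
  -- summability of S
  have hD : (0:ℝ) < Real.Gamma (α₀ + s) * Real.Gamma ((r:ℝ) + α₀) /
      (Real.Gamma (r:ℝ) * Real.Gamma α₀ * Real.Gamma s) := by
    have g1 : 0 < Real.Gamma (α₀ + s) := Real.Gamma_pos_of_pos (by linarith)
    have g2 : 0 < Real.Gamma ((r:ℝ) + α₀) := Real.Gamma_pos_of_pos (by linarith)
    have g3 : 0 < Real.Gamma (r:ℝ) := Real.Gamma_pos_of_pos hrp
    have g4 : 0 < Real.Gamma α₀ := Real.Gamma_pos_of_pos (by linarith)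
    have g5 : 0 < Real.Gamma s := Real.Gamma_pos_of_pos hs
    positivity
  set D : ℝ := Real.Gamma (α₀ + s) * Real.Gamma ((r:ℝ) + α₀) /
      (Real.Gamma (r:ℝ) * Real.Gamma α₀ * Real.Gamma s) with hDdef
  have hSform : ∀ n : ℕ, S n = D * (Real.Gamma ((n:ℝ) + r) / Real.Gamma ((n:ℝ) + r + (α₀ + s)) *
      (Real.Gamma ((n:ℝ) + s) / (n.factorial : ℝ)) * ((n:ℝ) + C)^2) := by
    intro n
    show ((n:ℝ) + C)^2 * (betaFn ((r : ℝ) + n) (α₀ + s) / betaFn (r : ℝ) α₀) *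
      (Real.Gamma ((n:ℝ) + s) / (n.factorial * Real.Gamma s)) = _
    rw [hDdef]
    unfold betaFn
    have hn : (0:ℝ) ≤ (n:ℝ) := Nat.cast_nonneg n
    have g1 : 0 < Real.Gamma ((r:ℝ) + n) := Real.Gamma_pos_of_pos (by linarith)
    have g2 : 0 < Real.Gamma (α₀ + s) := Real.Gamma_pos_of_pos (by linarith)
    have g3 : 0 < Real.Gamma ((r:ℝ) + n + (α₀ + s)) := Real.Gamma_pos_of_pos (by linarith)
    have g4 : 0 < Real.Gamma (r:ℝ) := Real.Gamma_pos_of_pos hrp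
    have g5 : 0 < Real.Gamma α₀ := Real.Gamma_pos_of_pos (by linarith)
    have g6 : 0 < Real.Gamma ((r:ℝ) + α₀) := Real.Gamma_pos_of_pos (by linarith)
    have g7 : 0 < Real.Gamma s := Real.Gamma_pos_of_pos hs
    have g8 : (0:ℝ) < (n.factorial : ℝ) := by exact_mod_cast Nat.factorial_pos n
    have hcomm : (n:ℝ) + r = (r:ℝ) + n := by ring
    rw [hcomm]
    have n1 := ne_of_gt g1
    have n3 := ne_of_gt g3
    have n4 := ne_of_gt g4
    have n5 := ne_of_gt g5
    have n6 := ne_of_gt g6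
    have n7 := ne_of_gt g7
    have n8 := ne_of_gt g8
    field_simp
  have hb : Summable (fun n : ℕ => ((n:ℝ) + 1 + 1) ^ (1 - α₀)) := by
    have h1 : Summable (fun n : ℕ => ((n:ℝ)) ^ (1 - α₀)) :=
      Real.summable_nat_rpow.mpr (by linarith)
    have h2 := (summable_nat_add_iff 2).mpr h1
    refine h2.congr fun n => ?_
    push_cast
    ring_nf
  have hSsummable : Summable S := by
    rw [← summable_nat_add_iff 1]
    refine Summable.of_nonneg_of_le (fun n => hSnn (n+1)) (fun n => ?_)
      (hb.mul_left (D * (4 * (1+s)^s * (1+C)^2)))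
    rw [hSform (n+1)]
    have hsb := slice_bound (s := s) (α₀ := α₀) (C := C) r hr hs hα₀ hC (n+1)
      (Nat.le_add_left 1 n)
    have hkey := mul_le_mul_of_nonneg_left hsb (le_of_lt hD)
    push_cast at hkey ⊢
    linarith
  -- bounded partial sums
  refine summable_of_sum_le (c := ∑' n, S n) (fun k => hFnn k) ?_
  intro U
  set N : ℕ := U.sup (fun k => ∑ j, k j) with hNdef
  have hsub : U ⊆ (Finset.range (N+1)).biUnion (fun n => Finset.Nat.antidiagonalTuple d n) := by
    intro k hk
    refine Finset.mem_biUnion.mpr ⟨∑ j, k j, ?_, Finset.Nat.mem_antidiagonalTuple.mpr rfl⟩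
    refine Finset.mem_range.mpr (Nat.lt_succ_of_le ?_)
    exact Finset.le_sup hk
  have hdisj : ∀ m ∈ (Finset.range (N+1) : Finset ℕ), ∀ n ∈ (Finset.range (N+1) : Finset ℕ),
      m ≠ n → Disjoint (Finset.Nat.antidiagonalTuple d m) (Finset.Nat.antidiagonalTuple d n) := by
    intro m _ n _ hmn
    refine Finset.disjoint_left.mpr fun k hk1 hk2 => hmn ?_
    rw [← Finset.Nat.mem_antidiagonalTuple.mp hk1, ← Finset.Nat.mem_antidiagonalTuple.mp hk2]
  calc ∑ k ∈ U, F k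
      ≤ ∑ k ∈ (Finset.range (N+1)).biUnion (fun n => Finset.Nat.antidiagonalTuple d n), F k :=
        Finset.sum_le_sum_of_subset_of_nonneg hsub (fun k _ _ => hFnn k)
    _ = ∑ n ∈ Finset.range (N+1), ∑ k ∈ Finset.Nat.antidiagonalTuple d n, F k :=
        Finset.sum_biUnion hdisj
    _ = ∑ n ∈ Finset.range (N+1), S n := by
        exact Finset.sum_congr rfl fun n _ => hslice n
    _ ≤ ∑' n, S n := Summable.sum_le_tsum _ (fun n _ => hSnn n) hSsummable


private lemma pmf_rec (i : Fin d) (k : Fin d → ℕ) :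
    ((∑ j, (k j : ℝ)) + r) * ((k i : ℝ) + α i) * pmf k
      = ((k i : ℝ) + 1) * ((∑ j, (k j : ℝ)) + r + α₀ + ∑ j, α j) *
          pmf (Function.update k i (k i + 1)) := by
  set s : ℝ := ∑ j, α j with hsdef
  have hs : 0 < s :=
    Finset.sum_pos (fun j _ => hα j) (Finset.univ_nonempty_iff.mpr (Fin.pos_iff_nonempty.mp hd))
  set n : ℝ := ∑ j, (k j : ℝ) with hndef
  have hn0 : 0 ≤ n := Finset.sum_nonneg fun j _ => Nat.cast_nonneg _
  have hrp : (0:ℝ) < (r:ℝ) := by exact_mod_cast Nat.lt_of_lt_of_le Nat.zero_lt_one hr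
  set k' : Fin d → ℕ := Function.update k i (k i + 1) with hk'def
  have hsum' : ∑ j, (k' j : ℝ) = n + 1 := sum_update_cast d k i
  -- the products
  set E : ℝ := ∏ j ∈ Finset.univ.erase i,
      Real.Gamma ((k j : ℝ) + α j) / (Nat.factorial (k j) * Real.Gamma (α j)) with hEdef
  have hprod1 : ∏ j, Real.Gamma ((k j : ℝ) + α j) / (Nat.factorial (k j) * Real.Gamma (α j))
      = Real.Gamma ((k i : ℝ) + α i) / (Nat.factorial (k i) * Real.Gamma (α i)) * E :=
    (Finset.mul_prod_erase Finset.univ _ (Finset.mem_univ i)).symm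
  have hprod2 : ∏ j, Real.Gamma ((k' j : ℝ) + α j) / (Nat.factorial (k' j) * Real.Gamma (α j))
      = Real.Gamma (((k i : ℝ) + 1) + α i) /
          ((((k i : ℝ) + 1) * Nat.factorial (k i)) * Real.Gamma (α i)) * E := by
    rw [← Finset.mul_prod_erase Finset.univ _ (Finset.mem_univ i)]
    congr 1
    · have h1 : k' i = k i + 1 := Function.update_self i (k i + 1) k
      rw [h1, Nat.factorial_succ]
      push_cast
      ring_nf
    · refine Finset.prod_congr rfl fun j hj => ?_
      have : k' j = k j := Function.update_of_ne (Finset.ne_of_mem_erase hj) _ k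
      rw [this]
  -- Gamma recurrences
  have e1 : Real.Gamma ((r:ℝ) + (n+1)) = ((r:ℝ)+n) * Real.Gamma ((r:ℝ)+n) := by
    have ht : (r:ℝ) + (n+1) = ((r:ℝ)+n) + 1 := by ring
    rw [ht, Real.Gamma_add_one (ne_of_gt (by linarith))]
  have e2 : Real.Gamma ((r:ℝ) + (n+1) + (α₀+s)) = ((r:ℝ)+n+(α₀+s)) *
      Real.Gamma ((r:ℝ)+n+(α₀+s)) := by
    have ht : (r:ℝ) + (n+1) + (α₀+s) = ((r:ℝ)+n+(α₀+s)) + 1 := by ring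
    rw [ht, Real.Gamma_add_one (ne_of_gt (by linarith))]
  have e3 : Real.Gamma (((k i : ℝ) + 1) + α i) = ((k i:ℝ) + α i) *
      Real.Gamma ((k i:ℝ) + α i) := by
    have ht : ((k i : ℝ) + 1) + α i = ((k i:ℝ) + α i) + 1 := by ring
    rw [ht, Real.Gamma_add_one (ne_of_gt (by
      have h1 := hα i
      have h2 : (0:ℝ) ≤ (k i:ℝ) := Nat.cast_nonneg _
      linarith))]
  -- expand
  rw [hpmf k, hpmf k', hsum', hprod1, hprod2]
  unfold betaFn
  rw [e1, e2, e3]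
  -- nonzero facts
  have hB : Real.Gamma ((r:ℝ) + n + (α₀ + s)) ≠ 0 := by
    refine ne_of_gt (Real.Gamma_pos_of_pos (by linarith))
  have hB0 : betaFn (r:ℝ) α₀ ≠ 0 := by
    unfold betaFn
    have g1 : 0 < Real.Gamma (r:ℝ) := Real.Gamma_pos_of_pos hrp
    have g2 : 0 < Real.Gamma α₀ := Real.Gamma_pos_of_pos (by linarith)
    have g3 : 0 < Real.Gamma ((r:ℝ) + α₀) := Real.Gamma_pos_of_pos (by linarith)
    positivity
  have hfa : ((k i).factorial : ℝ) ≠ 0 := by exact_mod_cast Nat.factorial_ne_zero _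
  have hΓα : Real.Gamma (α i) ≠ 0 := ne_of_gt (Real.Gamma_pos_of_pos (hα i))
  have hki1 : ((k i : ℝ) + 1) ≠ 0 := by positivity
  have hden : ((r:ℝ) + n + (α₀ + s)) ≠ 0 := ne_of_gt (by linarith)
  field_simp
  ring

end auxSection

/-- Stein identity for the Dirichlet negative multinomial distribution `DNM(r,α₀,α)`
on `ℕ^d`: for each coordinate `i` and any bounded `f`,
`E[(|X|+r)(X⁽ⁱ⁾+αᵢ) f(X+eᵢ) − X⁽ⁱ⁾(|X|−1+r+α₀+|α|) f(X)] = 0`. -/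
theorem dirichlet_negative_multinomial_stein_identity
    (d : ℕ) (hd : 0 < d) (r : ℕ) (hr : 1 ≤ r) (α₀ : ℝ) (hα₀ : 2 < α₀)
    (α : Fin d → ℝ) (hα : ∀ i, 0 < α i)
    (f : (Fin d → ℕ) → ℝ) (hf : ∃ C : ℝ, ∀ k, |f k| ≤ C)
    (pmf : (Fin d → ℕ) → ℝ)
    (hpmf : ∀ k : Fin d → ℕ, pmf k =
      betaFn ((r : ℝ) + ∑ i, (k i : ℝ)) (α₀ + ∑ i, α i) / betaFn (r : ℝ) α₀ *
        ∏ i, Real.Gamma ((k i : ℝ) + α i) / (Nat.factorial (k i) * Real.Gamma (α i))) :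
    ∀ i : Fin d,
      ∑' k : Fin d → ℕ,
        (((∑ j, (k j : ℝ)) + r) * ((k i : ℝ) + α i) * f (Function.update k i (k i + 1)) -
          (k i : ℝ) * ((∑ j, (k j : ℝ)) - 1 + r + α₀ + ∑ j, α j) * f k) * pmf k = 0 := by
  intro i
  obtain ⟨Cf, hCf⟩ := hf
  have hCf0 : 0 ≤ Cf := le_trans (abs_nonneg _) (hCf (fun _ => 0))
  have hp : ∀ k, 0 ≤ pmf k := pmf_nonneg d hd r hr α₀ hα₀ α hα pmf hpmf
  have hW := summable_weighted d hd r hr α₀ hα₀ α hα pmf hpmf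
  have hrp : (1:ℝ) ≤ (r:ℝ) := by exact_mod_cast hr
  have hs : 0 < ∑ j, α j :=
    Finset.sum_pos (fun j _ => hα j) (Finset.univ_nonempty_iff.mpr (Fin.pos_iff_nonempty.mp hd))
  set σ : (Fin d → ℕ) → (Fin d → ℕ) := fun k => Function.update k i (k i + 1) with hσ
  have hσinj : Function.Injective σ := by
    intro a b hab
    funext j
    by_cases hj : j = i
    · subst hj
      have h1 := congrFun hab j
      simp only [hσ, Function.update_self] at h1
      omega
    · have h1 := congrFun hab j
      simp only [hσ] at h1
      rwa [Function.update_of_ne hj, Function.update_of_ne hj] at h1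
  set G : (Fin d → ℕ) → ℝ := fun m =>
    (m i : ℝ) * ((∑ j, (m j : ℝ)) - 1 + r + α₀ + ∑ j, α j) * f m * pmf m with hG
  have hGbound : ∀ k, |G k| ≤ Cf * (((∑ j, (k j : ℝ)) + (r + α₀ + ∑ j, α j))^2 * pmf k) := by
    intro k
    have hpk := hp k
    have hn0 : (0:ℝ) ≤ ∑ j, (k j : ℝ) := Finset.sum_nonneg fun j _ => Nat.cast_nonneg _
    have hki : (k i : ℝ) ≤ ∑ j, (k j : ℝ) :=
      Finset.single_le_sum (f := fun j => ((k j : ℝ))) (fun j _ => Nat.cast_nonneg (k j)) (Finset.mem_univ i)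
    have hki0 : (0:ℝ) ≤ (k i : ℝ) := Nat.cast_nonneg _
    have he0 : (0:ℝ) ≤ (∑ j, (k j : ℝ)) - 1 + r + α₀ + ∑ j, α j := by linarith
    have habs : |G k| = (k i : ℝ) * ((∑ j, (k j : ℝ)) - 1 + r + α₀ + ∑ j, α j) * |f k| *
        pmf k := by
      simp only [hG]
      rw [abs_mul, abs_mul, abs_mul, abs_of_nonneg hki0, abs_of_nonneg he0,
        abs_of_nonneg hpk]
    rw [habs]
    have hmax : (k i : ℝ) * ((∑ j, (k j : ℝ)) - 1 + r + α₀ + ∑ j, α j)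
        ≤ ((∑ j, (k j : ℝ)) + (r + α₀ + ∑ j, α j))^2 := by
      have h1 : (k i : ℝ) ≤ (∑ j, (k j : ℝ)) + (r + α₀ + ∑ j, α j) := by linarith
      have h2 : (∑ j, (k j : ℝ)) - 1 + r + α₀ + ∑ j, α j
          ≤ (∑ j, (k j : ℝ)) + (r + α₀ + ∑ j, α j) := by linarith
      have h3 : (0:ℝ) ≤ (∑ j, (k j : ℝ)) + (r + α₀ + ∑ j, α j) := by linarith
      calc (k i : ℝ) * ((∑ j, (k j : ℝ)) - 1 + r + α₀ + ∑ j, α j)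
          ≤ ((∑ j, (k j : ℝ)) + (r + α₀ + ∑ j, α j)) *
            ((∑ j, (k j : ℝ)) + (r + α₀ + ∑ j, α j)) := mul_le_mul h1 h2 he0 h3
        _ = ((∑ j, (k j : ℝ)) + (r + α₀ + ∑ j, α j))^2 := (sq _).symm
    calc (k i : ℝ) * ((∑ j, (k j : ℝ)) - 1 + r + α₀ + ∑ j, α j) * |f k| * pmf k
        ≤ (((∑ j, (k j : ℝ)) + (r + α₀ + ∑ j, α j))^2 * Cf) * pmf k := by
          refine mul_le_mul_of_nonneg_right ?_ hpk
          exact mul_le_mul hmax (hCf k) (abs_nonneg _) (by positivity)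
      _ = Cf * ((((∑ j, (k j : ℝ)) + (r + α₀ + ∑ j, α j)))^2 * pmf k) := by ring
  have hGsum : Summable G := by
    rw [← summable_abs_iff]
    exact Summable.of_nonneg_of_le (fun k => abs_nonneg _) hGbound (hW.mul_left Cf)
  have hGσ : Summable (G ∘ σ) := hGsum.comp_injective hσinj
  have hzero : ∀ k, k ∉ Set.range σ → G k = 0 := by
    intro k hk
    by_cases hki : k i = 0
    · simp only [hG, hki]
      push_cast [hki]
      ring
    · exfalso
      refine hk ⟨Function.update k i (k i - 1), ?_⟩
      simp only [hσ]
      rw [Function.update_self, Function.update_idem]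
      have : k i - 1 + 1 = k i := Nat.succ_pred_eq_of_pos (Nat.pos_of_ne_zero hki)
      rw [this]
      exact Function.update_eq_self i k
  have hterm : ∀ k : Fin d → ℕ,
      (((∑ j, (k j : ℝ)) + r) * ((k i : ℝ) + α i) * f (Function.update k i (k i + 1)) -
        (k i : ℝ) * ((∑ j, (k j : ℝ)) - 1 + r + α₀ + ∑ j, α j) * f k) * pmf k
      = G (σ k) - G k := by
    intro k
    have hrec := pmf_rec d hd r hr α₀ hα₀ α hα pmf hpmf i k
    have h2 : ∑ j, ((σ k) j : ℝ) = (∑ j, (k j : ℝ)) + 1 := sum_update_cast d k i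
    have h1 : (σ k) i = k i + 1 := Function.update_self i (k i + 1) k
    simp only [hG, hσ] at h2 h1 ⊢
    rw [h2, h1]
    push_cast
    linear_combination (f (Function.update k i (k i + 1))) * hrec
  rw [tsum_congr hterm]
  have hGσ' : Summable (fun k => G (σ k)) := hGσ
  rw [Summable.tsum_sub hGσ' hGsum]
  rw [hσinj.tsum_eq (Function.support_subset_iff'.mpr hzero)]
  exact sub_self _
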